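/- arXiv:1102.4308 — 2 statements merged into one kernel-verified Lean document; each statement's English description precedes it below -/
import Mathlib

section
/- Let f : (0, ∞) → ℝ be continuously differentiable with f(r) → 0 as r → 0 and f(r) → π as r → ∞, and such that ∫₀^∞ ((f')² + sin²f/r²) r dr < ∞. Then ∫₀^∞ ((f'(r))² + sin²(f(r))/r²) · r dr ≥ 4. -/
open MeasureTheory Set Filter

/-- Bogomolny-type lower bound: a `C¹` map angle joining the two poles has reduced
Dirichlet energy at least `4`. -/
theorem bogomolny_lower_bound (f : ℝ → ℝ)
    (hf : ContDiffOn ℝ 1 f (Ioi (0 : ℝ)))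
    (h0 : Tendsto f (nhdsWithin 0 (Ioi 0)) (nhds 0))
    (hinf : Tendsto f atTop (nhds Real.pi))
    (hint : IntegrableOn (fun r => ((deriv f r) ^ 2 + Real.sin (f r) ^ 2 / r ^ 2) * r)
      (Ioi (0 : ℝ))) :
    4 ≤ ∫ r in Ioi (0 : ℝ), ((deriv f r) ^ 2 + Real.sin (f r) ^ 2 / r ^ 2) * r := by
  set E : ℝ → ℝ := fun r => ((deriv f r) ^ 2 + Real.sin (f r) ^ 2 / r ^ 2) * r with hE
  set g : ℝ → ℝ := fun r => 2 * Real.sin (f r) * deriv f r with hg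
  -- differentiability on Ioi 0
  have hdiff : ∀ r ∈ Ioi (0:ℝ), HasDerivAt f (deriv f r) r := by
    intro r hr
    have : DifferentiableAt ℝ f r :=
      (hf.differentiableOn one_ne_zero).differentiableAt (Ioi_mem_nhds hr)
    exact this.hasDerivAt
  -- pointwise bound : |g r| ≤ E r for r > 0
  have key : ∀ r ∈ Ioi (0:ℝ), |g r| ≤ E r := by
    intro r hr
    have hr0 : (0:ℝ) < r := hr
    set d := deriv f r
    set s := Real.sin (f r)
    have hEeq : E r = d ^ 2 * r + s ^ 2 / r := by
      simp only [hE]; field_simp; ring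
    have hgr : g r = 2 * s * d := rfl
    rw [abs_le, hEeq, hgr]
    constructor
    · have h1 : d ^ 2 * r + s ^ 2 / r + (2 * s * d) = (d * r + s) ^ 2 / r := by
        field_simp; ring
      nlinarith [div_nonneg (sq_nonneg (d * r + s)) hr0.le]
    · have h1 : d ^ 2 * r + s ^ 2 / r - 2 * s * d = (d * r - s) ^ 2 / r := by
        field_simp; ring
      nlinarith [div_nonneg (sq_nonneg (d * r - s)) hr0.le]
  have hEnonneg : ∀ r ∈ Ioi (0:ℝ), 0 ≤ E r := fun r hr =>
    le_trans (abs_nonneg _) (key r hr)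
  -- measurability of g on Ioi ε
  have hgmeas : ∀ ε > (0:ℝ), AEStronglyMeasurable g (volume.restrict (Ioi ε)) := by
    intro ε hε
    have hsub : Ioi ε ⊆ Ioi (0:ℝ) := fun x hx => lt_trans hε hx
    have hfc : ContinuousOn f (Ioi ε) := (hf.continuousOn).mono hsub
    have h1 : AEStronglyMeasurable (fun r => Real.sin (f r)) (volume.restrict (Ioi ε)) :=
      (Real.continuous_sin.comp_continuousOn hfc).aestronglyMeasurable measurableSet_Ioi
    have h2 : AEStronglyMeasurable (deriv f) (volume.restrict (Ioi ε)) :=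
      (measurable_deriv f).aestronglyMeasurable
    exact (aestronglyMeasurable_const.mul h1).mul h2
  -- for each ε > 0, the integral over Ioi ε of g equals 2 + 2 cos (f ε)
  have hstep : ∀ ε > (0:ℝ), 2 + 2 * Real.cos (f ε) ≤ ∫ r in Ioi (0:ℝ), E r := by
    intro ε hε
    have hsub : Ioi ε ⊆ Ioi (0:ℝ) := fun x hx => lt_trans hε hx
    have hEint : IntegrableOn E (Ioi ε) := hint.mono_set hsub
    have hgint : IntegrableOn g (Ioi ε) := by
      refine Integrable.mono hEint (hgmeas ε hε) ?_
      filter_upwards [ae_restrict_mem measurableSet_Ioi] with r hr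
      rw [Real.norm_eq_abs, Real.norm_eq_abs, abs_of_nonneg (hEnonneg r (hsub hr))]
      exact key r (hsub hr)
    have hG : ∀ r ∈ Ici ε, HasDerivAt (fun r => -2 * Real.cos (f r)) (g r) r := by
      intro r hr
      have hr0 : r ∈ Ioi (0:ℝ) := lt_of_lt_of_le hε hr
      have hfd := hdiff r hr0
      have : HasDerivAt (fun r => -2 * Real.cos (f r))
          (-2 * (-Real.sin (f r) * deriv f r)) r :=
        ((Real.hasDerivAt_cos (f r)).comp r hfd).const_mul (-2)
      convert this using 1
      simp [hg]; ring
    have hGtend : Tendsto (fun r => -2 * Real.cos (f r)) atTop (nhds 2) := by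
      have : Tendsto (fun r => -2 * Real.cos (f r)) atTop (nhds (-2 * Real.cos Real.pi)) :=
        (Real.continuous_cos.tendsto _ |>.comp hinf).const_mul (-2)
      simpa using this
    have hFTC : ∫ r in Ioi ε, g r = 2 - (-2 * Real.cos (f ε)) :=
      integral_Ioi_of_hasDerivAt_of_tendsto' hG hgint hGtend
    have h1 : ∫ r in Ioi ε, g r ≤ ∫ r in Ioi ε, E r := by
      refine setIntegral_mono_on hgint hEint measurableSet_Ioi ?_
      intro r hr
      exact le_trans (le_abs_self _) (key r (hsub hr))
    have h2 : ∫ r in Ioi ε, E r ≤ ∫ r in Ioi (0:ℝ), E r := by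
      refine setIntegral_mono_set hint ?_ (HasSubset.Subset.eventuallyLE hsub)
      filter_upwards [ae_restrict_mem measurableSet_Ioi] with r hr using hEnonneg r hr
    have := hFTC ▸ h1
    linarith
  -- take the limit ε → 0⁺
  have hlim : Tendsto (fun ε => 2 + 2 * Real.cos (f ε)) (nhdsWithin 0 (Ioi 0))
      (nhds 4) := by
    have : Tendsto (fun ε => 2 + 2 * Real.cos (f ε)) (nhdsWithin 0 (Ioi 0))
        (nhds (2 + 2 * Real.cos 0)) :=
      tendsto_const_nhds.add (((Real.continuous_cos.tendsto _).comp h0).const_mul 2)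
    norm_num at this
    exact this
  refine le_of_tendsto hlim ?_
  filter_upwards [self_mem_nhdsWithin] with ε hε using hstep ε hε
end

section
/- Let b : [s₀, ∞) → (0, e⁻¹) be a C¹ solution of b' = −b²·(1 + 1/(2·log(1/b))). Then b is decreasing, b(s) → 0 as s → ∞, and s·b(s) → 1 as s → ∞. -/
open Set Filter

/-- The logarithmically corrected modulation equation
`b' = -b²(1 + 1/(2 log(1/b)))`: `b` is decreasing, tends to `0`, and `s·b(s) → 1`. -/
theorem log_corrected_modulation (s₀ : ℝ) (b : ℝ → ℝ)
    (hrange : ∀ s ∈ Ici s₀, 0 < b s ∧ b s < Real.exp (-1))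
    (hb : ∀ s ∈ Ici s₀,
      HasDerivAt b (-(b s) ^ 2 * (1 + 1 / (2 * Real.log (1 / b s)))) s) :
    StrictAntiOn b (Ici s₀) ∧ Tendsto b atTop (nhds 0) ∧
      Tendsto (fun s => s * b s) atTop (nhds 1) := by
  set c : ℝ → ℝ := fun s => 1 + 1 / (2 * Real.log (1 / b s)) with hcdef
  have hbne : ∀ s ∈ Ici s₀, b s ≠ 0 := fun s hs => (hrange s hs).1.ne'
  have hlog : ∀ s ∈ Ici s₀, 1 < Real.log (1 / b s) := by
    intro s hs
    obtain ⟨h1, h2⟩ := hrange s hs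
    rw [Real.lt_log_iff_exp_lt (by positivity)]
    rw [lt_div_iff₀ h1]
    calc Real.exp 1 * b s < Real.exp 1 * Real.exp (-1) :=
          mul_lt_mul_of_pos_left h2 (Real.exp_pos 1)
      _ = 1 := by rw [← Real.exp_add]; norm_num
  have hc1 : ∀ s ∈ Ici s₀, 1 < c s := by
    intro s hs
    have h := hlog s hs
    have h2 : 0 < 2 * Real.log (1 / b s) := by linarith
    have : 0 < 1 / (2 * Real.log (1 / b s)) := by positivity
    simp only [hcdef]
    linarith
  have hcpos : ∀ s ∈ Ici s₀, 0 < c s := fun s hs => lt_trans one_pos (hc1 s hs)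
  have hcont : ContinuousOn b (Ici s₀) := fun s hs =>
    (hb s hs).continuousAt.continuousWithinAt
  -- Part 1: strict antitonicity
  have hanti : StrictAntiOn b (Ici s₀) := by
    apply strictAntiOn_of_deriv_neg (convex_Ici s₀) hcont
    intro x hx
    rw [interior_Ici] at hx
    have hx' : x ∈ Ici s₀ := mem_Ici.mpr (le_of_lt (mem_Ioi.mp hx))
    rw [(hb x hx').deriv]
    have h1 := (hrange x hx').1
    have h2 : 0 < 1 + 1 / (2 * Real.log (1 / b x)) := hcpos x hx'
    nlinarith [pow_pos h1 2, mul_pos (pow_pos h1 2) h2]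
  -- the function g = 1/b
  set g : ℝ → ℝ := fun s => (b s)⁻¹ with hgdef
  have hg : ∀ s ∈ Ici s₀, HasDerivAt g (c s) s := by
    intro s hs
    have h : HasDerivAt g (-(-b s ^ 2 * (1 + 1 / (2 * Real.log (1 / b s)))) / b s ^ 2) s :=
      (hb s hs).inv (hbne s hs)
    convert h using 1
    have hbs := hbne s hs
    rw [neg_mul, neg_neg, mul_div_right_comm, div_self (pow_ne_zero 2 hbs), one_mul]
  have hgpos : ∀ s ∈ Ici s₀, 0 < g s := fun s hs => inv_pos.mpr (hrange s hs).1
  have hgb : ∀ s, (g s)⁻¹ = b s := fun s => inv_inv (b s)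
  -- lower bound for g
  have hlow : ∀ s ∈ Ici s₀, g s₀ + (s - s₀) ≤ g s := by
    intro s hs
    have key := (convex_Ici s₀).mul_sub_le_image_sub_of_le_deriv
      (fun x hx => (hg x hx).continuousAt.continuousWithinAt)
      (fun x hx => by
        rw [interior_Ici] at hx
        exact (hg x (mem_Ici.mpr (mem_Ioi.mp hx).le)).differentiableAt.differentiableWithinAt)
      (C := 1)
      (fun x hx => by
        rw [interior_Ici] at hx
        rw [(hg x (mem_Ici.mpr (mem_Ioi.mp hx).le)).deriv]
        exact (hc1 x (mem_Ici.mpr (mem_Ioi.mp hx).le)).le)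
      s₀ self_mem_Ici s hs (by exact hs)
    linarith
  -- Part 2: b → 0
  have hb0 : Tendsto b atTop (nhds 0) := by
    have hlim : Tendsto (fun s => (g s₀ + (s - s₀))⁻¹) atTop (nhds 0) := by
      apply Tendsto.inv_tendsto_atTop
      apply tendsto_atTop_add_const_left
      simp only [sub_eq_add_neg]
      exact tendsto_atTop_add_const_right atTop (-s₀) tendsto_id
    apply tendsto_of_tendsto_of_tendsto_of_le_of_le' tendsto_const_nhds hlim
    · filter_upwards [eventually_ge_atTop s₀] with s hs
      exact (hrange s hs).1.le
    · filter_upwards [eventually_ge_atTop s₀] with s hs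
      have h1 := hlow s hs
      have h2 : 0 < g s₀ + (s - s₀) := by
        have := hgpos s₀ self_mem_Ici
        have hs' : s₀ ≤ s := hs
        linarith
      rw [← hgb s]
      exact inv_anti₀ h2 h1
  -- c → 1
  have hctend : Tendsto c atTop (nhds 1) := by
    have hbpos : ∀ᶠ s in atTop, 0 < b s :=
      (eventually_ge_atTop s₀).mono fun s hs => (hrange s hs).1
    have hinv : Tendsto (fun s => (b s)⁻¹) atTop atTop := by
      apply tendsto_inv_nhdsGT_zero.comp
      exact tendsto_nhdsWithin_of_tendsto_nhds_of_eventually_within _ hb0 hbpos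
    have hlogt : Tendsto (fun s => Real.log (1 / b s)) atTop atTop := by
      exact (Real.tendsto_log_atTop.comp hinv).congr fun s => by
        simp [Function.comp, one_div]
    have h2 : Tendsto (fun s => 2 * Real.log (1 / b s)) atTop atTop :=
      hlogt.const_mul_atTop two_pos
    have h3 : Tendsto (fun s => (2 * Real.log (1 / b s))⁻¹) atTop (nhds 0) :=
      h2.inv_tendsto_atTop
    have := h3.const_add (1 : ℝ)
    simpa [hcdef, one_div] using this
  -- g s / s → 1
  have hgs : Tendsto (fun s => g s / s) atTop (nhds 1) := by
    rw [Metric.tendsto_nhds]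
    intro ε hε
    -- upper bound setup
    have hub : ∀ᶠ s in atTop, c s < 1 + ε / 2 :=
      hctend.eventually (gt_mem_nhds (by linarith))
    obtain ⟨s₁', hs₁'⟩ := eventually_atTop.mp hub
    set s₁ := max s₀ s₁' with hs₁def
    have hs₁0 : s₀ ≤ s₁ := le_max_left _ _
    have hupper : ∀ s, s₁ ≤ s → g s ≤ g s₁ + (1 + ε / 2) * (s - s₁) := by
      intro s hs
      have key := (convex_Ici s₁).image_sub_le_mul_sub_of_deriv_le
        (fun x hx => (hg x (le_trans hs₁0 hx)).continuousAt.continuousWithinAt)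
        (fun x hx => by
          rw [interior_Ici] at hx
          exact (hg x (le_trans hs₁0 hx.le)).differentiableAt.differentiableWithinAt)
        (C := 1 + ε / 2)
        (fun x hx => by
          rw [interior_Ici] at hx
          rw [(hg x (le_trans hs₁0 hx.le)).deriv]
          exact (hs₁' x (le_trans (le_max_right _ _) hx.le)).le)
        s₁ self_mem_Ici s hs hs
      linarith
    -- tendsto of the two bounding functions
    have hlb_t : Tendsto (fun s => 1 + (g s₀ - s₀) / s) atTop (nhds 1) := by
      have := (tendsto_const_nhds (x := g s₀ - s₀) (f := atTop)).div_atTop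
        (tendsto_id (α := ℝ))
      simpa using (this.const_add (1 : ℝ))
    have hub_t : Tendsto (fun s => (1 + ε / 2) + (g s₁ - (1 + ε / 2) * s₁) / s)
        atTop (nhds (1 + ε / 2)) := by
      have := (tendsto_const_nhds (x := g s₁ - (1 + ε / 2) * s₁) (f := atTop)).div_atTop
        (tendsto_id (α := ℝ))
      simpa using (this.const_add (1 + ε / 2))
    have hev1 : ∀ᶠ s in atTop, 1 - ε < 1 + (g s₀ - s₀) / s :=
      hlb_t.eventually (lt_mem_nhds (by linarith))
    have hev2 : ∀ᶠ s in atTop, (1 + ε / 2) + (g s₁ - (1 + ε / 2) * s₁) / s < 1 + ε :=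
      hub_t.eventually (gt_mem_nhds (by linarith))
    filter_upwards [hev1, hev2, eventually_ge_atTop s₁, eventually_gt_atTop (0 : ℝ)]
      with s h1 h2 hs hspos
    have hs0 : s₀ ≤ s := le_trans hs₁0 hs
    rw [Real.dist_eq, abs_lt]
    constructor
    · -- 1 - ε < g s / s
      have := hlow s hs0
      have hgl : 1 + (g s₀ - s₀) / s ≤ g s / s := by
        rw [show (1 : ℝ) + (g s₀ - s₀) / s = (s + (g s₀ - s₀)) / s by
          field_simp]
        exact (div_le_div_iff_of_pos_right hspos).mpr (by linarith)
      linarith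
    · -- g s / s - 1 < ε
      have hgu : g s / s ≤ (1 + ε / 2) + (g s₁ - (1 + ε / 2) * s₁) / s := by
        rw [show (1 + ε / 2) + (g s₁ - (1 + ε / 2) * s₁) / s
            = (g s₁ + (1 + ε / 2) * (s - s₁)) / s by field_simp; ring]
        exact (div_le_div_iff_of_pos_right hspos).mpr (hupper s hs)
      linarith
  -- Part 3: s * b s → 1
  have hfinal : Tendsto (fun s => s * b s) atTop (nhds 1) := by
    have h := hgs.inv₀ one_ne_zero
    rw [inv_one] at h
    apply h.congr'
    filter_upwards [eventually_ge_atTop s₀, eventually_gt_atTop (0 : ℝ)] with s hs hspos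
    have hg0 : g s ≠ 0 := (hgpos s hs).ne'
    rw [inv_div, div_eq_mul_inv, hgb]
  exact ⟨hanti, hb0, hfinal⟩
end
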